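/- Let a > 0, let I ⊂ ℝ be an interval whose endpoints lie in Z_a = {2πk/a : k ∈ ℤ} with length |I| ≥ 2π/a, let λ ∈ ℂ, let x₀ be a nearest point to λ in Z_a, and let I' = I \ {x : |x - Re λ| < π/a}. Then (1/μ_a(I))·∫_I dμ_a(x)/|x - conj λ| ≤ μ_a({x₀})/(μ_a(I)·|x₀ - conj λ|) + C/|I| · ∫_{π/a}^{|I|} dx/√(x² + (Im λ)²) for a universal constant C, where μ_a = (2π/a)·Σ_{x∈Z_a} δ_x. -/

import Mathlib

open MeasureTheory

/-- The normalized counting measure `μ_a = (2π/a)·Σ_{x ∈ Z_a} δ_x` on the lattice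
`Z_a = {2πk/a : k ∈ ℤ}`. -/
noncomputable def latticeMeasure (a : ℝ) : Measure ℝ :=
  ENNReal.ofReal (2*Real.pi/a) • Measure.sum (fun k : ℤ => Measure.dirac ((2*Real.pi/a) * k))

private lemma aux_div_inv {c : ℝ} (X : ℝ) (hc : c ≠ 0) : c / (c * X) = X⁻¹ := by
  rcases eq_or_ne X 0 with h | h
  · simp [h]
  · field_simp

private lemma Zcore (H : ℤ → ℝ) (h0 : ∀ j, 0 ≤ H j)
    (hanti : ∀ i j : ℤ, 1 ≤ i → i ≤ j → H j ≤ H i)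
    (m₁ m₂ L : ℤ) (h1 : 1 ≤ m₁) (hL : m₂ ≤ m₁ + L) :
    ∑ j ∈ Finset.Icc m₁ m₂, H j ≤ ∑ j ∈ Finset.Icc 1 (1 + L), H j := by
  have hmap : (Finset.Icc (1:ℤ) (m₂ - m₁ + 1)).map (addRightEmbedding (m₁ - 1))
      = Finset.Icc m₁ m₂ := by
    rw [Finset.map_add_right_Icc]
    congr 1 <;> omega
  calc ∑ j ∈ Finset.Icc m₁ m₂, H j
      = ∑ j ∈ Finset.Icc (1:ℤ) (m₂ - m₁ + 1), H (j + (m₁ - 1)) := by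
        rw [← hmap, Finset.sum_map]; rfl
    _ ≤ ∑ j ∈ Finset.Icc (1:ℤ) (m₂ - m₁ + 1), H j := by
        refine Finset.sum_le_sum fun j hj => ?_
        rw [Finset.mem_Icc] at hj
        exact hanti j (j + (m₁ - 1)) hj.1 (by omega)
    _ ≤ ∑ j ∈ Finset.Icc 1 (1 + L), H j := by
        refine Finset.sum_le_sum_of_subset_of_nonneg (Finset.Icc_subset_Icc le_rfl (by omega))
          (fun j _ _ => h0 j)

private lemma term_bound {c t b : ℝ} (hc : 0 < c) {k k₀ : ℤ} (hkk : k ≠ k₀)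
    (hnear : |c*(k₀:ℝ) - t| ≤ |c*(k:ℝ) - t|) :
    (Real.sqrt ((c*(k:ℝ) - t)^2 + b^2))⁻¹
      ≤ 2 * (Real.sqrt ((c*((k - k₀ : ℤ):ℝ))^2 + b^2))⁻¹ := by
  set m : ℝ := ((k - k₀ : ℤ) : ℝ) with hm_def
  have hm : 1 ≤ |m| := by
    have h1 : (1:ℤ) ≤ |k - k₀| := Int.one_le_abs (by omega)
    rw [hm_def, ← Int.cast_abs]
    exact_mod_cast h1
  have hmm : c * m = (c*(k:ℝ) - t) - (c*(k₀:ℝ) - t) := by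
    rw [hm_def]; push_cast; ring
  have habs : c * |m| ≤ 2 * |c*(k:ℝ) - t| := by
    calc c * |m| = |c * m| := by rw [abs_mul, abs_of_pos hc]
      _ = |(c*(k:ℝ) - t) - (c*(k₀:ℝ) - t)| := by rw [hmm]
      _ ≤ |c*(k:ℝ) - t| + |c*(k₀:ℝ) - t| := abs_sub _ _
      _ ≤ 2 * |c*(k:ℝ) - t| := by linarith
  have hm2 : 1 ≤ m^2 := by nlinarith [sq_abs m]
  have hX : 0 < (c*m)^2 + b^2 := by
    nlinarith [mul_le_mul_of_nonneg_left hm2 (sq_nonneg c), mul_pos hc hc, sq_nonneg b]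
  have hsX : 0 < Real.sqrt ((c*m)^2 + b^2) := Real.sqrt_pos.mpr hX
  have hD0 : (0:ℝ) ≤ (c*(k:ℝ) - t)^2 + b^2 := by positivity
  have key : Real.sqrt ((c*m)^2 + b^2) ≤ 2 * Real.sqrt ((c*(k:ℝ) - t)^2 + b^2) := by
    have h2 : (c*m)^2 + b^2 ≤ (2 * Real.sqrt ((c*(k:ℝ) - t)^2 + b^2))^2 := by
      have hs := Real.sq_sqrt hD0
      nlinarith [hs, mul_self_le_mul_self (mul_nonneg hc.le (abs_nonneg m)) habs,
        sq_abs (c*(k:ℝ) - t), sq_abs m, sq_nonneg b]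
    calc Real.sqrt ((c*m)^2 + b^2)
        ≤ Real.sqrt ((2 * Real.sqrt ((c*(k:ℝ) - t)^2 + b^2))^2) := Real.sqrt_le_sqrt h2
      _ = 2 * Real.sqrt ((c*(k:ℝ) - t)^2 + b^2) := by
          rw [Real.sqrt_sq (by positivity)]
  have hhalf : 0 < Real.sqrt ((c*m)^2 + b^2) / 2 := by linarith
  have h3 : Real.sqrt ((c*m)^2 + b^2) / 2 ≤ Real.sqrt ((c*(k:ℝ) - t)^2 + b^2) := by
    linarith
  have h4 := inv_anti₀ hhalf h3
  calc (Real.sqrt ((c*(k:ℝ) - t)^2 + b^2))⁻¹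
      ≤ (Real.sqrt ((c*m)^2 + b^2) / 2)⁻¹ := h4
    _ = 2 * (Real.sqrt ((c*m)^2 + b^2))⁻¹ := by
        rw [inv_div]; ring

private lemma sum_le_int_aux (G : ℝ → ℝ) (hG0 : ∀ u, 0 ≤ G u)
    (hanti : ∀ u v : ℝ, 1/2 ≤ u → u ≤ v → G v ≤ G u)
    (hcont : ContinuousOn G (Set.Ici (1/2:ℝ)))
    (N : ℕ) (hN : 1 ≤ N) :
    ∑ i ∈ Finset.range (N+1), G ((i:ℝ)+1) ≤ 5 * ∫ u in (1/2:ℝ)..(N:ℝ), G u := by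
  have hint : ∀ x y : ℝ, 1/2 ≤ x → 1/2 ≤ y → IntervalIntegrable G volume x y := by
    intro x y hx hy
    refine (hcont.mono ?_).intervalIntegrable
    intro z hz
    exact le_trans (le_min hx hy) hz.1
  have hmono : ∀ x y : ℝ, 1/2 ≤ x → x ≤ y →
      (∫ u in (1/2:ℝ)..x, G u) ≤ ∫ u in (1/2:ℝ)..y, G u := by
    intro x y hx hxy
    have h := intervalIntegral.integral_add_adjacent_intervals
      (hint (1/2) x le_rfl hx) (hint x y hx (le_trans hx hxy))
    have h2 : 0 ≤ ∫ u in x..y, G u :=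
      intervalIntegral.integral_nonneg hxy (fun z _ => hG0 z)
    linarith
  obtain ⟨M, rfl⟩ : ∃ M, N = M + 1 := ⟨N - 1, by omega⟩
  have hMcast : ((M+1:ℕ):ℝ) = (M:ℝ) + 1 := by push_cast; ring
  rw [hMcast]
  set A := ∫ u in (1/2:ℝ)..((M:ℝ)+1), G u with hA_def
  have hG1 : G 1 ≤ 2 * A := by
    have h1 : (1 - 2⁻¹ : ℝ) * G 1 ≤ ∫ u in (1/2:ℝ)..1, G u := by
      have h := intervalIntegral.integral_mono_on (by norm_num : (1/2:ℝ) ≤ 1)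
        (intervalIntegrable_const (c := G 1)) (hint (1/2) 1 (by norm_num) (by norm_num))
        (fun x hx => hanti x 1 hx.1 hx.2)
      simpa using h
    have h2 : (∫ u in (1/2:ℝ)..1, G u) ≤ A :=
      hmono 1 ((M:ℝ)+1) (by norm_num) (by have := Nat.cast_nonneg (α := ℝ) M; linarith)
    linarith
  have hmid : ∑ i ∈ Finset.range M, G ((i:ℝ)+2) ≤ A := by
    rcases Nat.eq_zero_or_pos M with hM0 | hM0
    · subst hM0
      simp only [Finset.range_zero, Finset.sum_empty]
      have : (0:ℝ) ≤ ∫ u in (1/2:ℝ)..((0:ℝ)+1), G u :=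
        intervalIntegral.integral_nonneg (by norm_num) (fun z _ => hG0 z)
      rw [hA_def]
      simpa using this
    · have hanti' : AntitoneOn G (Set.Icc (1/2:ℝ) (1/2 + (M:ℕ))) :=
        fun x hx y hy hxy => hanti x y hx.1 hxy
      have h := hanti'.sum_le_integral
      calc ∑ i ∈ Finset.range M, G ((i:ℝ)+2)
          ≤ ∑ i ∈ Finset.range M, G (1/2 + ((i+1:ℕ):ℝ)) := by
            refine Finset.sum_le_sum fun i _ => ?_
            refine hanti (1/2 + ((i+1:ℕ):ℝ)) ((i:ℝ)+2) ?_ ?_ <;> push_cast <;> linarith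
              [Nat.cast_nonneg (α := ℝ) i]
        _ ≤ ∫ u in (1/2:ℝ)..(1/2 + (M:ℕ)), G u := h
        _ ≤ A := hmono (1/2 + (M:ℕ)) ((M:ℝ)+1)
            (by linarith [Nat.cast_nonneg (α := ℝ) M]) (by linarith)
  have hlast : G ((M:ℝ)+1+1) ≤ 2*A :=
    le_trans (hanti 1 ((M:ℝ)+1+1) (by norm_num)
      (by linarith [Nat.cast_nonneg (α := ℝ) M])) hG1
  have hsum : ∑ i ∈ Finset.range (M+1+1), G ((i:ℝ)+1)
      = (∑ i ∈ Finset.range M, G ((i:ℝ)+2)) + G 1 + G ((M:ℝ)+1+1) := by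
    rw [Finset.sum_range_succ, Finset.sum_range_succ']
    have e1 : ∀ i : ℕ, G (((i+1:ℕ):ℝ)+1) = G ((i:ℝ)+2) := by
      intro i; congr 1; push_cast; ring
    have e2 : G (((0:ℕ):ℝ)+1) = G 1 := by norm_num
    have e3 : G (((M+1:ℕ):ℝ)+1) = G ((M:ℝ)+1+1) := by congr 1; push_cast; ring
    rw [e2, e3]
    congr 1
    · congr 1
      exact Finset.sum_congr rfl fun i _ => e1 i
  have hA0 : 0 ≤ A :=
    intervalIntegral.integral_nonneg (by linarith [Nat.cast_nonneg (α := ℝ) M])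
      (fun z _ => hG0 z)
  rw [hsum]
  linarith

private lemma bridge (G : ℝ → ℝ) (N : ℕ) :
    ∑ j ∈ Finset.Icc (1:ℤ) (1 + (N:ℤ)), G (j:ℝ) = ∑ i ∈ Finset.range (N+1), G ((i:ℝ)+1) := by
  refine Finset.sum_nbij' (fun j => (j - 1).toNat) (fun i => (i:ℤ)+1) ?_ ?_ ?_ ?_ ?_
  · intro j hj
    rw [Finset.mem_Icc] at hj
    rw [Finset.mem_range]
    omega
  · intro i hi
    rw [Finset.mem_range] at hi
    rw [Finset.mem_Icc]
    omega
  · intro j hj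
    rw [Finset.mem_Icc] at hj
    omega
  · intro i _
    omega
  · intro j hj
    rw [Finset.mem_Icc] at hj
    congr 1
    have h1 : (((j-1).toNat : ℤ) : ℝ) = ((j:ℝ) - 1) := by
      have : ((j-1).toNat : ℤ) = j - 1 := Int.toNat_of_nonneg (by omega)
      rw [this]; push_cast; ring
    push_cast at h1 ⊢
    linarith





private lemma main_aux (c t b : ℝ) (hc : 0 < c) (k₁ k₂ k₀ : ℤ) (hk : k₁ + 1 ≤ k₂)
    (hnear : ∀ k : ℤ, |c*(k₀:ℝ) - t| ≤ |c*(k:ℝ) - t|) :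
    ∑ k ∈ Finset.Icc k₁ k₂, (Real.sqrt ((c*(k:ℝ) - t)^2 + b^2))⁻¹
      ≤ (Real.sqrt ((c*(k₀:ℝ) - t)^2 + b^2))⁻¹
        + 20 * ∫ u in (1/2:ℝ)..(((k₂ - k₁ : ℤ)):ℝ), (Real.sqrt ((c*u)^2 + b^2))⁻¹ := by
  set G : ℝ → ℝ := fun u => (Real.sqrt ((c*u)^2 + b^2))⁻¹ with hG_def
  set F : ℤ → ℝ := fun k => (Real.sqrt ((c*(k:ℝ) - t)^2 + b^2))⁻¹ with hF_def
  set H : ℤ → ℝ := fun j => 2 * G (j:ℝ) with hH_def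
  have hF0 : ∀ k, 0 ≤ F k := fun k => by rw [hF_def]; dsimp only; positivity
  have hG0 : ∀ u, 0 ≤ G u := fun u => by rw [hG_def]; dsimp only; positivity
  have hH0 : ∀ j, 0 ≤ H j := fun j => by
    rw [hH_def]; dsimp only; exact mul_nonneg (by norm_num) (hG0 j)
  have hGanti : ∀ u v : ℝ, 1/2 ≤ u → u ≤ v → G v ≤ G u := by
    intro u v hu huv
    have hu0 : 0 < u := by linarith
    have hcu : 0 < c*u := mul_pos hc hu0
    have hcuv : c*u ≤ c*v := mul_le_mul_of_nonneg_left huv hc.le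
    have h1 : 0 < (c*u)^2 + b^2 := by nlinarith [mul_pos hcu hcu, sq_nonneg b]
    have h2 : (c*u)^2 + b^2 ≤ (c*v)^2 + b^2 := by
      nlinarith [mul_self_le_mul_self hcu.le hcuv]
    rw [hG_def]; dsimp only
    exact inv_anti₀ (Real.sqrt_pos.mpr h1) (Real.sqrt_le_sqrt h2)
  have hHanti : ∀ i j : ℤ, 1 ≤ i → i ≤ j → H j ≤ H i := by
    intro i j hi hij
    have hi' : (1:ℝ) ≤ (i:ℝ) := by exact_mod_cast hi
    have hij' : (i:ℝ) ≤ (j:ℝ) := by exact_mod_cast hij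
    have := hGanti (i:ℝ) (j:ℝ) (by linarith) hij'
    rw [hH_def]; dsimp only; linarith
  have hHF : ∀ k : ℤ, k ≠ k₀ → F k ≤ H (k - k₀) := by
    intro k hkk
    rw [hF_def, hH_def, hG_def]
    exact term_bound hc hkk (hnear k)
  have hHeven : ∀ j : ℤ, H (-j) = H j := by
    intro j
    have hcast : ((-j : ℤ):ℝ) = -(j:ℝ) := by push_cast; ring
    rw [hH_def]; dsimp only
    rw [hcast, hG_def]; dsimp only
    congr 3
    ring
  set N : ℕ := (k₂ - k₁).toNat with hN_def
  have hNZ : (N : ℤ) = k₂ - k₁ := by rw [hN_def]; omega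
  have hN1 : 1 ≤ N := by omega
  -- the bound for the full positive block
  have hblock : ∑ j ∈ Finset.Icc (1:ℤ) (1 + (N:ℤ)), H j
      ≤ 10 * ∫ u in (1/2:ℝ)..((N:ℕ):ℝ), G u := by
    have h1 : ∑ j ∈ Finset.Icc (1:ℤ) (1 + (N:ℤ)), H j
        = 2 * ∑ j ∈ Finset.Icc (1:ℤ) (1 + (N:ℤ)), G (j:ℝ) := by
      rw [Finset.mul_sum]
    have hGcont : ContinuousOn G (Set.Ici (1/2:ℝ)) := by
      intro u hu
      have hu' : (1/2:ℝ) ≤ u := hu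
      have hu0 : 0 < u := by linarith
      have hcu : 0 < c*u := mul_pos hc hu0
      have hX : 0 < (c*u)^2 + b^2 := by nlinarith [mul_pos hcu hcu, sq_nonneg b]
      rw [hG_def]
      exact (((((continuous_const.mul continuous_id).pow 2).add
        continuous_const).sqrt.continuousAt).inv₀
        (ne_of_gt (Real.sqrt_pos.mpr hX))).continuousWithinAt
    rw [h1, bridge G N]
    have h2 := sum_le_int_aux G hG0 hGanti hGcont N hN1
    linarith
  -- split the sum
  have hsub : Finset.Icc k₁ k₂ ⊆
      ({k₀} ∪ Finset.Icc k₁ (min k₂ (k₀-1))) ∪ Finset.Icc (max k₁ (k₀+1)) k₂ := by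
    intro x hx
    simp only [Finset.mem_Icc, Finset.mem_union, Finset.mem_singleton] at hx ⊢
    omega
  have hdisj1 : Disjoint ({k₀} : Finset ℤ) (Finset.Icc k₁ (min k₂ (k₀-1))) := by
    rw [Finset.disjoint_left]
    intro x hx hx2
    simp only [Finset.mem_singleton] at hx
    rw [Finset.mem_Icc] at hx2
    omega
  have hdisj2 : Disjoint (({k₀} : Finset ℤ) ∪ Finset.Icc k₁ (min k₂ (k₀-1)))
      (Finset.Icc (max k₁ (k₀+1)) k₂) := by
    rw [Finset.disjoint_left]
    intro x hx hx2
    simp only [Finset.mem_union, Finset.mem_singleton, Finset.mem_Icc] at hx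
    rw [Finset.mem_Icc] at hx2
    omega
  have hsplit : ∑ k ∈ Finset.Icc k₁ k₂, F k
      ≤ F k₀ + (∑ k ∈ Finset.Icc k₁ (min k₂ (k₀-1)), F k)
        + ∑ k ∈ Finset.Icc (max k₁ (k₀+1)) k₂, F k := by
    calc ∑ k ∈ Finset.Icc k₁ k₂, F k
        ≤ ∑ k ∈ (({k₀} ∪ Finset.Icc k₁ (min k₂ (k₀-1))) ∪ Finset.Icc (max k₁ (k₀+1)) k₂), F k :=
          Finset.sum_le_sum_of_subset_of_nonneg hsub (fun k _ _ => hF0 k)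
      _ = F k₀ + (∑ k ∈ Finset.Icc k₁ (min k₂ (k₀-1)), F k)
          + ∑ k ∈ Finset.Icc (max k₁ (k₀+1)) k₂, F k := by
          rw [Finset.sum_union hdisj2, Finset.sum_union hdisj1, Finset.sum_singleton]
  -- right block
  have hright : ∑ k ∈ Finset.Icc (max k₁ (k₀+1)) k₂, F k
      ≤ ∑ j ∈ Finset.Icc (1:ℤ) (1 + (N:ℤ)), H j := by
    have h1 : ∑ k ∈ Finset.Icc (max k₁ (k₀+1)) k₂, F k
        ≤ ∑ k ∈ Finset.Icc (max k₁ (k₀+1)) k₂, H (k - k₀) := by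
      refine Finset.sum_le_sum fun k hk' => ?_
      rw [Finset.mem_Icc] at hk'
      exact hHF k (by omega)
    have hmap : (Finset.Icc (max k₁ (k₀+1) - k₀) (k₂ - k₀)).map (addRightEmbedding k₀)
        = Finset.Icc (max k₁ (k₀+1)) k₂ := by
      rw [Finset.map_add_right_Icc]
      congr 1 <;> omega
    have h2 : ∑ k ∈ Finset.Icc (max k₁ (k₀+1)) k₂, H (k - k₀)
        = ∑ j ∈ Finset.Icc (max k₁ (k₀+1) - k₀) (k₂ - k₀), H j := by
      rw [← hmap, Finset.sum_map]
      exact Finset.sum_congr rfl fun j _ => by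
        simp [addRightEmbedding]
    have h3 := Zcore H hH0 hHanti (max k₁ (k₀+1) - k₀) (k₂ - k₀) (N:ℤ)
      (by omega) (by omega)
    linarith
  -- left block
  have hleft : ∑ k ∈ Finset.Icc k₁ (min k₂ (k₀-1)), F k
      ≤ ∑ j ∈ Finset.Icc (1:ℤ) (1 + (N:ℤ)), H j := by
    have h1 : ∑ k ∈ Finset.Icc k₁ (min k₂ (k₀-1)), F k
        ≤ ∑ k ∈ Finset.Icc k₁ (min k₂ (k₀-1)), H (k₀ - k) := by
      refine Finset.sum_le_sum fun k hk' => ?_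
      rw [Finset.mem_Icc] at hk'
      have := hHF k (by omega)
      rwa [show k - k₀ = -(k₀ - k) by ring, hHeven] at this
    have h2 : ∑ k ∈ Finset.Icc k₁ (min k₂ (k₀-1)), H (k₀ - k)
        = ∑ j ∈ Finset.Icc (k₀ - min k₂ (k₀-1)) (k₀ - k₁), H j := by
      refine Finset.sum_nbij' (fun k => k₀ - k) (fun j => k₀ - j) ?_ ?_ ?_ ?_ ?_
      · intro k hk'
        rw [Finset.mem_Icc] at hk' ⊢
        omega
      · intro j hj
        rw [Finset.mem_Icc] at hj ⊢
        omega
      · intro k _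
        omega
      · intro j _
        omega
      · intro k _
        rfl
    have h3 := Zcore H hH0 hHanti (k₀ - min k₂ (k₀-1)) (k₀ - k₁) (N:ℤ)
      (by omega) (by omega)
    linarith
  have hcast : (((k₂ - k₁ : ℤ)):ℝ) = ((N:ℕ):ℝ) := by
    rw [← hNZ]; push_cast; ring
  rw [hcast]
  have hFk0 : F k₀ = (Real.sqrt ((c*(k₀:ℝ) - t)^2 + b^2))⁻¹ := rfl
  calc ∑ k ∈ Finset.Icc k₁ k₂, F k
      ≤ F k₀ + (∑ k ∈ Finset.Icc k₁ (min k₂ (k₀-1)), F k)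
        + ∑ k ∈ Finset.Icc (max k₁ (k₀+1)) k₂, F k := hsplit
    _ ≤ F k₀ + 20 * ∫ u in (1/2:ℝ)..((N:ℕ):ℝ), G u := by
        have := hblock
        linarith [hleft, hright]
    _ = (Real.sqrt ((c*(k₀:ℝ) - t)^2 + b^2))⁻¹
        + 20 * ∫ u in (1/2:ℝ)..((N:ℕ):ℝ), (Real.sqrt ((c*u)^2 + b^2))⁻¹ := by
        rw [hFk0]





/-- Let `a > 0`, let `I = [α,β]` be an interval with endpoints in `Z_a` and length
`|I| = β - α ≥ 2π/a`, let `λ ∈ ℂ`, and let `x₀` be a nearest point of `Z_a` to `λ`.  Then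
`(1/μ_a(I))·∫_I dμ_a(x)/|x - conj λ|
  ≤ μ_a({x₀})/(μ_a(I)·|x₀ - conj λ|) + (C/|I|)·∫_{π/a}^{|I|} dx/√(x² + (Im λ)²)`
for a universal constant `C`. -/
theorem stmt_16 :
    ∃ C : ℝ, 0 < C ∧ ∀ (a α β : ℝ) (l : ℂ) (x₀ : ℝ), 0 < a →
      (∃ k : ℤ, α = 2*Real.pi*k/a) → (∃ k : ℤ, β = 2*Real.pi*k/a) →
      2*Real.pi/a ≤ β - α →
      (∃ k : ℤ, x₀ = 2*Real.pi*k/a) →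
      (∀ k : ℤ, dist l ((x₀ : ℝ) : ℂ) ≤ dist l (((2*Real.pi*(k:ℝ)/a : ℝ)) : ℂ)) →
      ((latticeMeasure a (Set.Icc α β)).toReal)⁻¹
          * (∫ x in Set.Icc α β, ‖(x:ℂ) - (starRingEnd ℂ) l‖⁻¹ ∂(latticeMeasure a))
        ≤ (latticeMeasure a {x₀}).toReal
            / ((latticeMeasure a (Set.Icc α β)).toReal * ‖((x₀ : ℝ) : ℂ) - (starRingEnd ℂ) l‖)
          + C/(β - α) * (∫ x in (Real.pi/a)..(β - α), (Real.sqrt (x^2 + l.im^2))⁻¹) := by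
  classical
  refine ⟨20, by norm_num, ?_⟩
  intro a α β l x₀ ha hα hβ hlen hx₀ hnearest
  obtain ⟨k₁, hk₁⟩ := hα
  obtain ⟨k₂, hk₂⟩ := hβ
  obtain ⟨k₀, hk₀⟩ := hx₀
  obtain ⟨c, hc_def⟩ : ∃ c : ℝ, c = 2*Real.pi/a := ⟨_, rfl⟩
  have hc : 0 < c := by rw [hc_def]; positivity
  have hcne : c ≠ 0 := ne_of_gt hc
  have hane : a ≠ 0 := ne_of_gt ha
  have hα' : α = c * (k₁:ℝ) := by rw [hk₁, hc_def]; ring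
  have hβ' : β = c * (k₂:ℝ) := by rw [hk₂, hc_def]; ring
  have hx₀' : x₀ = c * (k₀:ℝ) := by rw [hk₀, hc_def]; ring
  subst hα' hβ' hx₀'
  have hk : k₁ + 1 ≤ k₂ := by
    have h1 : c ≤ c * ((k₂:ℝ) - (k₁:ℝ)) := by
      have : c ≤ c*(k₂:ℝ) - c*(k₁:ℝ) := by rw [hc_def] at *; linarith [hlen]
      linarith
    have h2 : (1:ℝ) ≤ (k₂:ℝ) - (k₁:ℝ) := by
      by_contra hcon
      push_neg at hcon
      nlinarith
    have h3 : (1:ℝ) + (k₁:ℝ) ≤ (k₂:ℝ) := by linarith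
    have h4 : (1:ℤ) + k₁ ≤ k₂ := by exact_mod_cast h3
    omega
  -- basic norm computations
  have hnorm2 : ∀ x : ℝ, ‖(x:ℂ) - (starRingEnd ℂ) l‖ = Real.sqrt ((x - l.re)^2 + l.im^2) := by
    intro x
    rw [Complex.norm_def, Complex.normSq_apply]
    congr 1
    simp [Complex.sub_re, Complex.sub_im, Complex.conj_re, Complex.conj_im]
    ring
  have hdist : ∀ x : ℝ, dist l ((x:ℝ):ℂ) = Real.sqrt ((l.re - x)^2 + l.im^2) := by
    intro x
    rw [Complex.dist_eq, Complex.norm_def, Complex.normSq_apply]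
    congr 1
    simp [Complex.sub_re, Complex.sub_im]
    ring
  have hnear : ∀ k : ℤ, |c*(k₀:ℝ) - l.re| ≤ |c*(k:ℝ) - l.re| := by
    intro k
    have h := hnearest k
    have harg : (2*Real.pi*(k:ℝ)/a : ℝ) = c * (k:ℝ) := by rw [hc_def]; ring
    rw [harg, hdist, hdist] at h
    have hA : (0:ℝ) ≤ (l.re - c*(k₀:ℝ))^2 + l.im^2 := by positivity
    have hB : (0:ℝ) ≤ (l.re - c*(k:ℝ))^2 + l.im^2 := by positivity
    have h2 := pow_le_pow_left₀ (Real.sqrt_nonneg _) h 2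
    rw [Real.sq_sqrt hA, Real.sq_sqrt hB] at h2
    rw [← Real.sqrt_sq_eq_abs, ← Real.sqrt_sq_eq_abs]
    apply Real.sqrt_le_sqrt
    nlinarith
  -- lattice measure facts
  have hlat : latticeMeasure a
      = ENNReal.ofReal c • Measure.sum (fun k : ℤ => Measure.dirac (c * (k:ℝ))) := by
    rw [hc_def]; rfl
  have hmem : ∀ k : ℤ, c*(k:ℝ) ∈ Set.Icc (c*(k₁:ℝ)) (c*(k₂:ℝ)) ↔ k ∈ Finset.Icc k₁ k₂ := by
    intro k
    rw [Set.mem_Icc, Finset.mem_Icc]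
    constructor
    · rintro ⟨h1, h2⟩
      exact ⟨by exact_mod_cast (mul_le_mul_iff_right₀ hc).1 h1,
        by exact_mod_cast (mul_le_mul_iff_right₀ hc).1 h2⟩
    · rintro ⟨h1, h2⟩
      constructor
      · exact (mul_le_mul_iff_right₀ hc).2 (by exact_mod_cast h1)
      · exact (mul_le_mul_iff_right₀ hc).2 (by exact_mod_cast h2)
  have hrestrict : (latticeMeasure a).restrict (Set.Icc (c*(k₁:ℝ)) (c*(k₂:ℝ)))
      = ENNReal.ofReal c • ∑ k ∈ Finset.Icc k₁ k₂, Measure.dirac (c*(k:ℝ)) := by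
    rw [hlat, Measure.restrict_smul, Measure.restrict_sum _ measurableSet_Icc]
    congr 1
    ext s hs
    rw [Measure.sum_apply _ hs, Measure.finset_sum_apply]
    rw [tsum_eq_sum (s := Finset.Icc k₁ k₂) ?_]
    · refine Finset.sum_congr rfl fun k hk' => ?_
      rw [restrict_dirac, if_pos ((hmem k).2 hk')]
    · intro k hk'
      rw [restrict_dirac, if_neg (fun hmem' => hk' ((hmem k).1 hmem'))]
      simp
  set N : ℕ := (k₂ - k₁).toNat with hN_def
  have hNZ : (N : ℤ) = k₂ - k₁ := by rw [hN_def]; omega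
  have hNR : ((N:ℕ):ℝ) = (k₂:ℝ) - (k₁:ℝ) := by
    have := congrArg (fun z : ℤ => (z:ℝ)) hNZ
    push_cast at this
    exact this
  have hN1R : (1:ℝ) ≤ ((N:ℕ):ℝ) := by
    have : (1:ℕ) ≤ N := by omega
    exact_mod_cast this
  have hNne : ((N:ℕ):ℝ) ≠ 0 := by linarith
  have hcard : (Finset.Icc k₁ k₂).card = N + 1 := by
    rw [Int.card_Icc]
    omega
  have hμI : (latticeMeasure a (Set.Icc (c*(k₁:ℝ)) (c*(k₂:ℝ)))).toReal = c * (((N:ℕ):ℝ) + 1) := by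
    have h1 : latticeMeasure a (Set.Icc (c*(k₁:ℝ)) (c*(k₂:ℝ)))
        = ENNReal.ofReal c * ((N:ℕ) + 1 : ℕ) := by
      rw [← Measure.restrict_apply_self, hrestrict, Measure.smul_apply, Measure.finset_sum_apply]
      have h2 : ∀ k ∈ Finset.Icc k₁ k₂,
          Measure.dirac (c*(k:ℝ)) (Set.Icc (c*(k₁:ℝ)) (c*(k₂:ℝ))) = 1 := by
        intro k hk'
        rw [Measure.dirac_apply' _ measurableSet_Icc,
          Set.indicator_of_mem ((hmem k).2 hk')]
        rfl
      rw [Finset.sum_congr rfl h2, Finset.sum_const, hcard]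
      simp [smul_eq_mul, mul_comm]
    rw [h1, ENNReal.toReal_mul, ENNReal.toReal_ofReal hc.le, ENNReal.toReal_natCast]
    push_cast
    ring
  have hμx : (latticeMeasure a {c*(k₀:ℝ)}).toReal = c := by
    have h1 : latticeMeasure a {c*(k₀:ℝ)} = ENNReal.ofReal c := by
      rw [hlat, Measure.smul_apply, Measure.sum_apply _ (measurableSet_singleton _)]
      have h2 : ∀ k : ℤ, Measure.dirac (c*(k:ℝ)) {c*(k₀:ℝ)}
          = if k = k₀ then 1 else 0 := by
        intro k
        rcases eq_or_ne k k₀ with rfl | hne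
        · rw [if_pos rfl]
          exact Measure.dirac_apply_of_mem rfl
        · rw [if_neg hne, Measure.dirac_apply' _ (measurableSet_singleton _),
            Set.indicator_of_notMem]
          intro hEq
          have h3 : (k:ℝ) = (k₀:ℝ) := mul_left_cancel₀ hcne hEq
          exact hne (by exact_mod_cast h3)
      rw [tsum_congr h2, tsum_ite_eq]
      simp
    rw [h1, ENNReal.toReal_ofReal hc.le]
  have hmeas : Measurable fun x : ℝ => ‖(x:ℂ) - (starRingEnd ℂ) l‖⁻¹ :=
    (Complex.measurable_ofReal.sub measurable_const).norm.inv
  have hInt : (∫ x in Set.Icc (c*(k₁:ℝ)) (c*(k₂:ℝ)),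
        ‖(x:ℂ) - (starRingEnd ℂ) l‖⁻¹ ∂(latticeMeasure a))
      = c * ∑ k ∈ Finset.Icc k₁ k₂, ‖((c*(k:ℝ) : ℝ):ℂ) - (starRingEnd ℂ) l‖⁻¹ := by
    rw [hrestrict, integral_smul_measure, integral_finset_sum_measure ?_]
    · rw [ENNReal.toReal_ofReal hc.le, smul_eq_mul]
      congr 1
      exact Finset.sum_congr rfl fun k _ => integral_dirac _ _
    · intro k _
      refine ⟨hmeas.aestronglyMeasurable, ?_⟩
      rw [HasFiniteIntegral]
      rw [lintegral_dirac]
      exact ENNReal.coe_lt_top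
  have htargetJ : (∫ x in (Real.pi/a)..(c*(k₂:ℝ) - c*(k₁:ℝ)), (Real.sqrt (x^2 + l.im^2))⁻¹)
      = c * ∫ u in (1/2:ℝ)..((N:ℕ):ℝ), (Real.sqrt ((c*u)^2 + l.im^2))⁻¹ := by
    have h1 : Real.pi/a = c*(1/2) := by rw [hc_def]; ring
    have h2 : c*(k₂:ℝ) - c*(k₁:ℝ) = c*((N:ℕ):ℝ) := by rw [hNR]; ring
    rw [h1, h2, ← intervalIntegral.smul_integral_comp_mul_left]
    simp [smul_eq_mul]
  -- main estimate
  have hS := main_aux c l.re l.im hc k₁ k₂ k₀ hk hnear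
  rw [show (((k₂ - k₁ : ℤ)):ℝ) = ((N:ℕ):ℝ) by rw [hNR]; push_cast; ring] at hS
  set s : ℝ := Real.sqrt ((c*(k₀:ℝ) - l.re)^2 + l.im^2) with hs_def
  set J : ℝ := ∫ u in (1/2:ℝ)..((N:ℕ):ℝ), (Real.sqrt ((c*u)^2 + l.im^2))⁻¹ with hJ_def
  set S : ℝ := ∑ k ∈ Finset.Icc k₁ k₂, (Real.sqrt ((c*(k:ℝ) - l.re)^2 + l.im^2))⁻¹ with hS_def
  have hsum_eq : ∑ k ∈ Finset.Icc k₁ k₂, ‖((c*(k:ℝ) : ℝ):ℂ) - (starRingEnd ℂ) l‖⁻¹ = S := by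
    rw [hS_def]
    exact Finset.sum_congr rfl fun k _ => by rw [hnorm2]
  have hs_eq : ‖((c*(k₀:ℝ) : ℝ):ℂ) - (starRingEnd ℂ) l‖ = s := by rw [hnorm2, hs_def]
  have hJ0 : 0 ≤ J := by
    rw [hJ_def]
    apply intervalIntegral.integral_nonneg (by linarith)
    intro u _
    positivity
  have hs0 : 0 ≤ s := Real.sqrt_nonneg _
  have hS0 : 0 ≤ S := by
    rw [hS_def]
    exact Finset.sum_nonneg fun k _ => by positivity
  rw [hμI, hμx, hInt, htargetJ, hsum_eq, hs_eq]
  -- final arithmetic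
  have e2 : c / (c*(((N:ℕ):ℝ)+1) * s) = ((((N:ℕ):ℝ)+1) * s)⁻¹ := by
    rw [mul_assoc]
    exact aux_div_inv _ hcne
  rw [e2]
  have e1 : (c*(((N:ℕ):ℝ)+1))⁻¹ * (c*S) = ((((N:ℕ):ℝ)+1))⁻¹ * S := by
    rw [mul_inv]
    field_simp
  have e3 : 20/(c*(k₂:ℝ) - c*(k₁:ℝ)) * (c*J) = 20 * J / ((N:ℕ):ℝ) := by
    have h2 : c*(k₂:ℝ) - c*(k₁:ℝ) = c*((N:ℕ):ℝ) := by rw [hNR]; ring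
    rw [h2]
    field_simp
  rw [e1, e3]
  have h4 : ((((N:ℕ):ℝ)+1))⁻¹ * S ≤ ((((N:ℕ):ℝ)+1))⁻¹ * (s⁻¹ + 20*J) :=
    mul_le_mul_of_nonneg_left hS (by positivity)
  have h6 : ((((N:ℕ):ℝ)+1))⁻¹ * s⁻¹ = ((((N:ℕ):ℝ)+1) * s)⁻¹ := (mul_inv _ _).symm
  have h7 : 20*J/(((N:ℕ):ℝ)+1) ≤ 20*J/((N:ℕ):ℝ) := by
    apply div_le_div_of_nonneg_left (by linarith) (by linarith) (by linarith)
  have h8 : ((((N:ℕ):ℝ)+1))⁻¹ * (s⁻¹ + 20*J)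
      = ((((N:ℕ):ℝ)+1))⁻¹ * s⁻¹ + 20*J/(((N:ℕ):ℝ)+1) := by ring
  linarith
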